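/- Let δ > 0 and d ≥ 1. For every x ∈ ℝ^d and every permutation π sorting x in decreasing order (x_{π(1)} ≥ ⋯ ≥ x_{π(d)}), the vector PLSoftMax^δ(x) = (1/δ) · P_π^{-1} · SM_{(k_x, d)} · P_π · x + P_π^{-1} · u^{(k_x)} lies in the simplex Δ_{d−1}: all its coordinates are nonnegative and they sum to 1. -/

import Mathlib

open Finset
open scoped Classical

/-- The soft-max matrix `SM_{(k,d)}` (1-indexed description): `m_{11} = (k−1)/k`;
`m_{ii} = 1/i` for `2 ≤ i ≤ k`; `m_{i1} = −1/k` for `2 ≤ i ≤ k`;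
`m_{ij} = −1/(j(j−1))` for `1 ≤ i < j ≤ k`, `j ≥ 2`; all other entries `0`. -/
noncomputable def SM (k d : ℕ) : Matrix (Fin d) (Fin d) ℝ :=
  Matrix.of fun i j =>
    if k < (i : ℕ) + 1 ∨ k < (j : ℕ) + 1 then 0
    else if (i : ℕ) + 1 = 1 ∧ (j : ℕ) + 1 = 1 then ((k : ℝ) - 1) / k
    else if (i : ℕ) = (j : ℕ) then 1 / ((i : ℕ) + 1 : ℝ)
    else if (j : ℕ) + 1 = 1 then -1 / (k : ℝ)
    else if (i : ℕ) < (j : ℕ) then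
      -1 / ((((j : ℕ) + 1 : ℕ) : ℝ) * (((j : ℕ) + 1 : ℝ) - 1))
    else 0

/-- The vector `u^{(k)} ∈ ℝ^d`, `u^{(k)}_i = 1/k` for the first `k` coordinates, else `0`. -/
noncomputable def uvec (k d : ℕ) : Fin d → ℝ :=
  fun i => if (i : ℕ) + 1 ≤ k then 1 / (k : ℝ) else 0

/-- The permutation matrix `P_π`, with `1`'s at entries `(i, π(i))`. -/
def permMat (d : ℕ) (π : Equiv.Perm (Fin d)) : Matrix (Fin d) (Fin d) ℝ :=
  Matrix.of fun i j => if j = π i then 1 else 0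

/-- `π` is a sorting permutation for `x`, i.e. `x_{π(1)} ≥ x_{π(2)} ≥ ⋯ ≥ x_{π(d)}`. -/
def Sorts {d : ℕ} (x : Fin d → ℝ) (π : Equiv.Perm (Fin d)) : Prop :=
  ∀ i j : Fin d, i ≤ j → x (π j) ≤ x (π i)

/-- `k_x`: the largest `k ∈ {1,…,d}` with `x_{π(1)} − x_{π(k)} ≤ δ`. -/
noncomputable def kx {d : ℕ} (δ : ℝ) (x : Fin d → ℝ) (π : Equiv.Perm (Fin d)) : ℕ :=
  sSup {k : ℕ | 1 ≤ k ∧ k ≤ d ∧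
    ∃ h0 : 0 < d, ∃ h : k - 1 < d, x (π ⟨0, h0⟩) - x (π ⟨k - 1, h⟩) ≤ δ}

/-- `PLSoftMax^δ(x) = (1/δ)·P_π⁻¹·SM_{(k_x,d)}·P_π·x + P_π⁻¹·u^{(k_x)}`,
computed using the sorting permutation `π` of `x`. -/
noncomputable def PLSoftMax {d : ℕ} (δ : ℝ) (x : Fin d → ℝ)
    (π : Equiv.Perm (Fin d)) : Fin d → ℝ :=
  (1 / δ) • ((permMat d π⁻¹).mulVec
      ((SM (kx δ x π) d).mulVec ((permMat d π).mulVec x)))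
    + (permMat d π⁻¹).mulVec (uvec (kx δ x π) d)

/-- For every `x` and every sorting permutation `π` of `x`, the vector
`PLSoftMax^δ(x)` lies in the simplex: coordinates are nonnegative and sum to `1`. -/
/- ===== auxiliary material ===== -/

lemma permMat_mulVec {d : ℕ} (π : Equiv.Perm (Fin d)) (v : Fin d → ℝ) :
    (permMat d π).mulVec v = fun i => v (π i) := by
  funext i
  simp [permMat, Matrix.mulVec, dotProduct, ite_mul]

noncomputable def Fm (K : ℕ) (i j : ℕ) : ℝ :=
  if K < i + 1 ∨ K < j + 1 then 0
  else if i + 1 = 1 ∧ j + 1 = 1 then ((K : ℝ) - 1) / K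
  else if i = j then 1 / ((i : ℕ) + 1 : ℝ)
  else if j + 1 = 1 then -1 / (K : ℝ)
  else if i < j then -1 / (((j + 1 : ℕ) : ℝ) * ((j + 1 : ℝ) - 1))
  else 0

lemma SM_apply (K d : ℕ) (i j : Fin d) : SM K d i j = Fm K (i : ℕ) (j : ℕ) := rfl

lemma telescope (a b : ℕ) (hab : a ≤ b) :
    ∑ n ∈ Finset.Ico a b, ((1:ℝ)/n - 1/(n+1)) = 1/a - 1/b := by
  induction b, hab using Nat.le_induction with
  | base => simp
  | succ b hb ih => rw [Finset.sum_Ico_succ_top hb, ih]; push_cast; ring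

lemma Fm_rowsum (K d m : ℕ) (hKd : K ≤ d) (hm : m + 1 ≤ K) :
    ∑ n ∈ Finset.range d, Fm K m n = 0 := by
  have hK0 : (K:ℝ) ≠ 0 := by
    have h : K ≠ 0 := by omega
    exact_mod_cast h
  have h1 : ∑ n ∈ Finset.range d, Fm K m n = ∑ n ∈ Finset.range K, Fm K m n := by
    refine (Finset.sum_subset (Finset.range_subset_range.2 hKd) ?_).symm
    intro n _ hn
    simp only [Finset.mem_range, not_lt] at hn
    unfold Fm
    rw [if_pos (Or.inr (by omega))]
  have htel := telescope (m+1) K hm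
  have htail : ∑ n ∈ Finset.Ico (m+1) K, Fm K m n = -((1/((m:ℝ)+1)) - 1/K) := by
    have : ∀ n ∈ Finset.Ico (m+1) K, Fm K m n = -((1/(n:ℝ)) - 1/((n:ℝ)+1)) := by
      intro n hn
      simp only [Finset.mem_Ico] at hn
      have hn0 : (n:ℝ) ≠ 0 := by
        exact_mod_cast (by omega : n ≠ 0)
      have hn1 : (n:ℝ) + 1 ≠ 0 := by positivity
      unfold Fm
      rw [if_neg (by omega), if_neg (by omega), if_neg (by omega), if_neg (by omega),
        if_pos (by omega)]
      push_cast
      field_simp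
      rw [add_sub_cancel_right, div_self hn0]; ring
    rw [Finset.sum_congr rfl this, Finset.sum_neg_distrib, htel]
    push_cast
    ring_nf
  rw [h1, Finset.range_eq_Ico, ← Finset.sum_Ico_consecutive _ (by omega : 0 ≤ m+1) hm, htail]
  rcases Nat.eq_zero_or_pos m with hm0 | hm1
  · subst hm0
    have hs : Finset.Ico 0 1 = {0} := rfl
    rw [hs, Finset.sum_singleton]
    have : Fm K 0 0 = ((K:ℝ)-1)/K := by
      unfold Fm
      rw [if_neg (by omega), if_pos (by omega)]
    rw [this]
    push_cast
    field_simp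
    ring
  · have hsplit : ∑ n ∈ Finset.Ico 0 (m+1), Fm K m n
        = ∑ n ∈ Finset.Ico 0 1, Fm K m n + ∑ n ∈ Finset.Ico 1 (m+1), Fm K m n := by
      rw [Finset.sum_Ico_consecutive _ (by omega : 0 ≤ 1) (by omega : 1 ≤ m+1)]
    have h0 : ∑ n ∈ Finset.Ico 0 1, Fm K m n = -1/(K:ℝ) := by
      have hs : Finset.Ico 0 1 = {0} := rfl
      rw [hs, Finset.sum_singleton]
      unfold Fm
      rw [if_neg (by omega), if_neg (by omega), if_neg (by omega), if_pos (by omega)]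
    have h2 : ∑ n ∈ Finset.Ico 1 (m+1), Fm K m n = 1/((m:ℝ)+1) := by
      rw [Finset.sum_eq_single_of_mem m (by simp [Finset.mem_Ico]; omega)]
      · unfold Fm
        rw [if_neg (by omega), if_neg (by omega), if_pos rfl]
      · intro n hn hne
        simp only [Finset.mem_Ico] at hn
        unfold Fm
        rw [if_neg (by omega), if_neg (by omega), if_neg (by omega), if_neg (by omega),
          if_neg (by omega)]
    rw [hsplit, h0, h2]
    ring

lemma Fm_colsum (K d j : ℕ) (hKd : K ≤ d) (hj : j < d) :
    ∑ n ∈ Finset.range d, Fm K n j = 0 := by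
  rcases le_or_gt (j+1) K with hjK | hjK
  · have hK0 : (K:ℝ) ≠ 0 := by
      have h : K ≠ 0 := by omega
      exact_mod_cast h
    rcases Nat.eq_zero_or_pos j with hj0 | hj1
    · subst hj0
      have h1 : ∑ n ∈ Finset.range d, Fm K n 0 = ∑ n ∈ Finset.range K, Fm K n 0 := by
        refine (Finset.sum_subset (Finset.range_subset_range.2 hKd) ?_).symm
        intro n _ hn
        simp only [Finset.mem_range, not_lt] at hn
        unfold Fm
        rw [if_pos (Or.inl (by omega))]
      rw [h1, Finset.range_eq_Ico,
        ← Finset.sum_Ico_consecutive _ (by omega : 0 ≤ 1) (by omega : 1 ≤ K)]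
      have h0 : ∑ n ∈ Finset.Ico 0 1, Fm K n 0 = ((K:ℝ)-1)/K := by
        have hs : Finset.Ico 0 1 = {0} := rfl
        rw [hs, Finset.sum_singleton]
        unfold Fm
        rw [if_neg (by omega), if_pos (by omega)]
      have h2 : ∑ n ∈ Finset.Ico 1 K, Fm K n 0 = (K-1 : ℕ) • (-1/(K:ℝ)) := by
        rw [Finset.sum_congr rfl (fun n hn => ?_), Finset.sum_const, Nat.card_Ico]
        simp only [Finset.mem_Ico] at hn
        unfold Fm
        rw [if_neg (by omega), if_neg (by omega), if_neg (by omega), if_pos (by omega)]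
      rw [h0, h2, nsmul_eq_mul, Nat.cast_sub (by omega)]
      push_cast
      field_simp
      ring
    · have h1 : ∑ n ∈ Finset.range d, Fm K n j = ∑ n ∈ Finset.range (j+1), Fm K n j := by
        refine (Finset.sum_subset (Finset.range_subset_range.2 (by omega)) ?_).symm
        intro n _ hn
        simp only [Finset.mem_range, not_lt] at hn
        unfold Fm
        rcases le_or_gt (K+1) (n+1) with h | h
        · rw [if_pos (Or.inl (by omega))]
        · rw [if_neg (by omega), if_neg (by omega), if_neg (by omega), if_neg (by omega),
            if_neg (by omega)]
      have hj0 : (j:ℝ) ≠ 0 := by exact_mod_cast (by omega : j ≠ 0)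
      rw [h1, Finset.sum_range_succ]
      have h2 : ∑ n ∈ Finset.range j, Fm K n j
          = j • (-1 / (((j + 1 : ℕ) : ℝ) * ((j + 1 : ℝ) - 1))) := by
        rw [Finset.sum_congr rfl (fun n hn => ?_), Finset.sum_const, Finset.card_range]
        simp only [Finset.mem_range] at hn
        unfold Fm
        rw [if_neg (by omega), if_neg (by omega), if_neg (by omega), if_neg (by omega),
          if_pos (by omega)]
      have h3 : Fm K j j = 1/((j:ℝ)+1) := by
        unfold Fm
        rw [if_neg (by omega), if_neg (by omega), if_pos rfl]
      rw [h2, h3, nsmul_eq_mul]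
      push_cast
      have : (j:ℝ) + 1 ≠ 0 := by positivity
      field_simp
      rw [add_sub_cancel_right, div_self hj0]; ring
  · refine Finset.sum_eq_zero fun n _ => ?_
    unfold Fm
    rw [if_pos (Or.inr (by omega))]


theorem plsoftmax_mem_simplex (d : ℕ) (hd : 1 ≤ d) (δ : ℝ) (hδ : 0 < δ)
    (x : Fin d → ℝ) (π : Equiv.Perm (Fin d)) (hπ : Sorts x π) :
    (∀ i, 0 ≤ PLSoftMax δ x π i) ∧ ∑ i, PLSoftMax δ x π i = 1 := by
  have hd0 : 0 < d := hd
  set K := kx δ x π with hKdef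
  have hmem : K ∈ {k : ℕ | 1 ≤ k ∧ k ≤ d ∧
      ∃ h0 : 0 < d, ∃ h : k - 1 < d, x (π ⟨0, h0⟩) - x (π ⟨k - 1, h⟩) ≤ δ} := by
    rw [hKdef]
    unfold kx
    apply Nat.sSup_mem
    · exact ⟨1, le_refl 1, hd, hd0, by omega, by simp [hδ.le]⟩
    · exact ⟨d, fun k hk => hk.2.1⟩
  obtain ⟨hK1, hKd, h0, hlt, hKδ⟩ := hmem
  have hKR : (0:ℝ) < K := by exact_mod_cast hK1
  have hKne : (K:ℝ) ≠ 0 := ne_of_gt hKR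
  set z : Fin d → ℝ := (SM K d).mulVec (fun i => x (π i)) with hzdef
  have hz : ∀ m : Fin d, z m = ∑ j : Fin d, Fm K (m:ℕ) (j:ℕ) * x (π j) := by
    intro m
    simp [hzdef, Matrix.mulVec, dotProduct, SM_apply]
  have hPL : ∀ i, PLSoftMax δ x π i = (1/δ) * z (π⁻¹ i) + uvec K d (π⁻¹ i) := by
    intro i
    rw [PLSoftMax, permMat_mulVec π x, permMat_mulVec π⁻¹, permMat_mulVec π⁻¹]
    simp [← hKdef, ← hzdef]
  have hrowsum : ∀ m : Fin d, (m:ℕ) + 1 ≤ K → ∑ j : Fin d, Fm K (m:ℕ) (j:ℕ) = 0 := by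
    intro m hm
    exact (Fin.sum_univ_eq_sum_range (fun n => Fm K (m:ℕ) n) d).trans
      (Fm_rowsum K d (m:ℕ) hKd hm)
  have hcolsum : ∀ j : Fin d, ∑ m : Fin d, Fm K (m:ℕ) (j:ℕ) = 0 := by
    intro j
    exact (Fin.sum_univ_eq_sum_range (fun n => Fm K n (j:ℕ)) d).trans
      (Fm_colsum K d (j:ℕ) hKd j.isLt)
  constructor
  · -- nonnegativity
    intro i
    rw [hPL i]
    set m : Fin d := π⁻¹ i with hmdef
    rcases le_or_gt ((m:ℕ)+1) K with hm | hm
    · -- m within the first K coordinates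
      have hum : uvec K d m = 1/(K:ℝ) := by
        unfold uvec; rw [if_pos hm]
      have hzm : z m = ∑ j : Fin d, Fm K (m:ℕ) (j:ℕ) * (x (π j) - x (π m)) := by
        rw [hz m]
        have : ∑ j : Fin d, Fm K (m:ℕ) (j:ℕ) * (x (π j) - x (π m))
            = ∑ j : Fin d, Fm K (m:ℕ) (j:ℕ) * x (π j)
              - (∑ j : Fin d, Fm K (m:ℕ) (j:ℕ)) * x (π m) := by
          rw [Finset.sum_mul, ← Finset.sum_sub_distrib]
          exact Finset.sum_congr rfl fun j _ => by ring
        rw [this, hrowsum m hm]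
        ring
      have hbound : -δ/(K:ℝ) ≤ z m := by
        rw [hzm]
        have hconst : ∑ j : Fin d, (if (j:ℕ) = 0 then -δ/(K:ℝ) else 0) = -δ/(K:ℝ) := by
          rw [Finset.sum_eq_single_of_mem (⟨0, hd0⟩ : Fin d) (Finset.mem_univ _)]
          · rw [if_pos rfl]
          · intro j _ hj
            rw [if_neg (fun h => hj (Fin.ext h))]
        rw [← hconst]
        apply Finset.sum_le_sum
        intro j _
        by_cases hj0 : (j:ℕ) = 0
        · rw [if_pos hj0]
          have hje : j = ⟨0, hd0⟩ := Fin.ext hj0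
          subst hje
          by_cases hm0 : (m:ℕ) = 0
          · have hme : (⟨0, hd0⟩ : Fin d) = m := (Fin.ext hm0).symm
            rw [hme, sub_self, mul_zero]
            have : 0 ≤ δ/(K:ℝ) := by positivity
            linarith [neg_div (K:ℝ) δ]
          · have hFm : Fm K (m:ℕ) 0 = -1/(K:ℝ) := by
              unfold Fm
              rw [if_neg (by omega), if_neg (by omega), if_neg (by omega), if_pos (by omega)]
            have hle1 : (⟨0, hd0⟩ : Fin d) ≤ m := by
              rw [Fin.le_def]; omega
            have h1 : 0 ≤ x (π ⟨0, hd0⟩) - x (π m) := sub_nonneg.2 (hπ _ _ hle1)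
            have hle2 : m ≤ (⟨K-1, hlt⟩ : Fin d) := by
              rw [Fin.le_def]; simp; omega
            have h2' : x (π ⟨K-1, hlt⟩) ≤ x (π m) := hπ _ _ hle2
            have h00 : x (π (⟨0, hd0⟩ : Fin d)) = x (π (⟨0, h0⟩ : Fin d)) := rfl
            have h2 : x (π ⟨0, hd0⟩) - x (π m) ≤ δ := by
              rw [h00]; linarith
            rw [hFm]
            rw [div_le_iff₀ hKR]
            have : (-1/(K:ℝ)) * (x (π ⟨0, hd0⟩) - x (π m)) * (K:ℝ)
                = -(x (π ⟨0, hd0⟩) - x (π m)) := by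
              field_simp
            rw [this]
            linarith
        · rw [if_neg hj0]
          rcases lt_trichotomy ((j:ℕ)) ((m:ℕ)) with h | h | h
          · have hF : Fm K (m:ℕ) (j:ℕ) = 0 := by
              unfold Fm
              rw [if_neg (by omega), if_neg (by omega), if_neg (by omega), if_neg (by omega),
                if_neg (by omega)]
            rw [hF, zero_mul]
          · have hje : j = m := Fin.ext h
            rw [hje, sub_self, mul_zero]
          · rcases le_or_gt ((j:ℕ)+1) K with hjK | hjK
            · have hF : Fm K (m:ℕ) (j:ℕ)
                  = -1 / ((((j:ℕ) + 1 : ℕ) : ℝ) * (((j:ℕ) + 1 : ℝ) - 1)) := by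
                unfold Fm
                rw [if_neg (by omega), if_neg (by omega), if_neg (by omega),
                  if_neg (by omega), if_pos h]
              have hFle : Fm K (m:ℕ) (j:ℕ) ≤ 0 := by
                rw [hF]
                have hj1 : (1:ℝ) ≤ (j:ℕ) := by exact_mod_cast (by omega : 1 ≤ (j:ℕ))
                have hpos : (0:ℝ) < (((j:ℕ) + 1 : ℕ) : ℝ) * (((j:ℕ) + 1 : ℝ) - 1) := by
                  push_cast
                  nlinarith
                have := div_nonneg (by norm_num : (0:ℝ) ≤ 1) hpos.le
                rw [neg_div]
                linarith
              have hmle : m ≤ j := by rw [Fin.le_def]; omega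
              have hxle : x (π j) - x (π m) ≤ 0 := sub_nonpos.2 (hπ _ _ hmle)
              nlinarith
            · have hF : Fm K (m:ℕ) (j:ℕ) = 0 := by
                unfold Fm
                rw [if_pos (Or.inr (by omega))]
              rw [hF, zero_mul]
      have h1δ : (0:ℝ) < 1/δ := by positivity
      have := mul_le_mul_of_nonneg_left hbound h1δ.le
      have heq : (1/δ) * (-δ/(K:ℝ)) = -(1/(K:ℝ)) := by
        field_simp
      rw [hum]
      linarith [heq ▸ this]
    · -- m beyond K: everything vanishes
      have hzm : z m = 0 := by
        rw [hz m]
        refine Finset.sum_eq_zero fun j _ => ?_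
        have hF : Fm K (m:ℕ) (j:ℕ) = 0 := by
          unfold Fm
          rw [if_pos (Or.inl (by omega))]
        rw [hF, zero_mul]
      have hum : uvec K d m = 0 := by
        unfold uvec; rw [if_neg (by omega)]
      rw [hzm, hum, mul_zero, add_zero]
  · -- the sum is 1
    have hstep : ∑ i, PLSoftMax δ x π i
        = ∑ m : Fin d, ((1/δ) * z m + uvec K d m) := by
      rw [Finset.sum_congr rfl fun i _ => hPL i]
      exact Equiv.sum_comp (π⁻¹ : Equiv.Perm (Fin d)) (fun m => (1/δ) * z m + uvec K d m)
    rw [hstep, Finset.sum_add_distrib, ← Finset.mul_sum]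
    have hzsum : ∑ m : Fin d, z m = 0 := by
      rw [Finset.sum_congr rfl fun m _ => hz m, Finset.sum_comm]
      refine Finset.sum_eq_zero fun j _ => ?_
      rw [← Finset.sum_mul, hcolsum j, zero_mul]
    have husum : ∑ m : Fin d, uvec K d m = 1 := by
      have h1 : ∑ m : Fin d, uvec K d m
          = ∑ n ∈ Finset.range d, (if n + 1 ≤ K then 1/(K:ℝ) else 0) :=
        Fin.sum_univ_eq_sum_range (fun n => if n + 1 ≤ K then 1/(K:ℝ) else 0) d
      rw [h1]
      have h2 : ∑ n ∈ Finset.range d, (if n + 1 ≤ K then 1/(K:ℝ) else 0)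
          = ∑ n ∈ Finset.range K, (if n + 1 ≤ K then 1/(K:ℝ) else 0) := by
        refine (Finset.sum_subset (Finset.range_subset_range.2 hKd) ?_).symm
        intro n _ hn
        simp only [Finset.mem_range, not_lt] at hn
        rw [if_neg (by omega)]
      rw [h2, Finset.sum_congr rfl fun n hn => if_pos (by
        simp only [Finset.mem_range] at hn; omega), Finset.sum_const, Finset.card_range,
        nsmul_eq_mul]
      field_simp
    rw [hzsum, husum, mul_zero, zero_add]
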